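/- arXiv:1706.00475 — 2 statements merged into one kernel-verified Lean document; each statement's English description precedes it below -/
import Mathlib

section
/- Let Λ be an artin algebra and X a module in C_Λ = Gen(Q̃) ∩ Cogen(Q̃). Then the projective cover P(X) of X is injective, and the injective envelope I(X) of X is projective; consequently both P(X) and I(X) lie in C_Λ. -/
open Function LinearMap

section Prelim

variable (Λ : Type) [Ring Λ]

/-- A module that is both projective and injective. -/
def IsProjInj (M : Type) [AddCommGroup M] [Module Λ M] : Prop :=
  Module.Projective Λ M ∧ Module.Injective Λ M

/-- `X` is generated by the projective-injective modules: it is a quotient of a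
finitely generated projective-injective module (equivalently, of a finite direct sum of
copies of `Q̃`). -/
def GenByProjInj (X : Type) [AddCommGroup X] [Module Λ X] : Prop :=
  ∃ Q : ModuleCat.{0} Λ, Module.Finite Λ Q ∧ IsProjInj Λ Q ∧
    ∃ f : Q →ₗ[Λ] X, Surjective f

/-- `X` is cogenerated by the projective-injective modules: it embeds into a
finitely generated projective-injective module. -/
def CogenByProjInj (X : Type) [AddCommGroup X] [Module Λ X] : Prop :=
  ∃ Q : ModuleCat.{0} Λ, Module.Finite Λ Q ∧ IsProjInj Λ Q ∧
    ∃ f : X →ₗ[Λ] Q, Injective f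

/-- Membership in `C_Λ = Gen(Q̃) ∩ Cogen(Q̃)`. -/
def MemC (X : Type) [AddCommGroup X] [Module Λ X] : Prop :=
  GenByProjInj Λ X ∧ CogenByProjInj Λ X

/-- `pdLEcat Λ n X` : `X` has projective dimension at most `n`. -/
def pdLEcat : ℕ → ModuleCat.{0} Λ → Prop
  | 0, X => Module.Projective Λ X
  | n+1, X => ∃ (P : ModuleCat.{0} Λ) (g : P →ₗ[Λ] X),
      Module.Projective Λ P ∧ Module.Finite Λ P ∧ Surjective g ∧
      pdLEcat n (ModuleCat.of Λ (↥(LinearMap.ker g)))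

/-- Projective dimension at most `n`, for a bare module. -/
def pdLE (n : ℕ) (X : Type) [AddCommGroup X] [Module Λ X] : Prop :=
  pdLEcat Λ n (ModuleCat.of Λ X)

/-- `idLEcat Λ n X` : `X` has injective dimension at most `n`. -/
def idLEcat : ℕ → ModuleCat.{0} Λ → Prop
  | 0, X => Module.Injective Λ X
  | n+1, X => ∃ (I : ModuleCat.{0} Λ) (f : X →ₗ[Λ] I),
      Module.Injective Λ I ∧ Injective f ∧
      idLEcat n (ModuleCat.of Λ (↥I ⧸ LinearMap.range f))

/-- Injective dimension at most `n`, for a bare module. -/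
def idLE (n : ℕ) (X : Type) [AddCommGroup X] [Module Λ X] : Prop :=
  idLEcat Λ n (ModuleCat.of Λ X)

/-- Global dimension at most `d` (on finitely generated modules). -/
def GlobalDimLE (d : ℕ) : Prop :=
  ∀ X : ModuleCat.{0} Λ, Module.Finite Λ X → pdLEcat Λ d X

/-- Global dimension exactly `d`. -/
def GlobalDimEq (d : ℕ) : Prop :=
  GlobalDimLE Λ d ∧ ∀ m, GlobalDimLE Λ m → d ≤ m

/-- `Ext¹_Λ(Y, X) = 0`, expressed by the splitting of all short exact sequences
`0 → X → E → Y → 0`. -/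
def Ext1Vanish (Y X : Type) [AddCommGroup Y] [Module Λ Y]
    [AddCommGroup X] [Module Λ X] : Prop :=
  ∀ (E : ModuleCat.{0} Λ) (f : X →ₗ[Λ] E) (g : E →ₗ[Λ] Y),
    Injective f → Surjective g → LinearMap.range f = LinearMap.ker g →
    ∃ r : E →ₗ[Λ] X, r ∘ₗ f = LinearMap.id

/-- `M` belongs to `add T`: `M` is a direct summand of a finite direct sum of copies of `T`. -/
def InAddOf (T M : Type) [AddCommGroup T] [Module Λ T]
    [AddCommGroup M] [Module Λ M] : Prop :=
  ∃ (m : ℕ) (p : (Fin m → T) →ₗ[Λ] M) (s : M →ₗ[Λ] (Fin m → T)),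
    p ∘ₗ s = LinearMap.id

/-- A (classical) tilting module. -/
def IsTilting (T : Type) [AddCommGroup T] [Module Λ T] : Prop :=
  pdLE Λ 1 T ∧ Ext1Vanish Λ T T ∧
  ∃ (T0 T1 : ModuleCat.{0} Λ) (f : Λ →ₗ[Λ] T0) (g : T0 →ₗ[Λ] T1),
    InAddOf Λ T T0 ∧ InAddOf Λ T T1 ∧ Injective f ∧ Surjective g ∧
    LinearMap.range f = LinearMap.ker g

/-- A (classical) cotilting module. -/
def IsCotilting (T : Type) [AddCommGroup T] [Module Λ T] : Prop :=
  idLE Λ 1 T ∧ Ext1Vanish Λ T T ∧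
  ∀ (I : ModuleCat.{0} Λ), Module.Finite Λ I → Module.Injective Λ I →
    ∃ (C0 C1 : ModuleCat.{0} Λ) (u : C0 →ₗ[Λ] C1) (v : C1 →ₗ[Λ] I),
      InAddOf Λ T C0 ∧ InAddOf Λ T C1 ∧ Injective u ∧ Surjective v ∧
      LinearMap.range u = LinearMap.ker v

/-- Dominant dimension at least `2`: there is an exact sequence `0 → Λ → Q₀ → Q₁`
with `Q₀, Q₁` projective-injective. -/
def DomdimGE2 : Prop :=
  ∃ (Q0 Q1 : ModuleCat.{0} Λ) (f : Λ →ₗ[Λ] Q0) (g : Q0 →ₗ[Λ] Q1),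
    Module.Finite Λ Q0 ∧ IsProjInj Λ Q0 ∧ Module.Finite Λ Q1 ∧ IsProjInj Λ Q1 ∧
    Injective f ∧ LinearMap.range f = LinearMap.ker g

/-- An indecomposable (nonzero) module: the only idempotent endomorphisms are `0` and `id`. -/
def Indecomposable (M : Type) [AddCommGroup M] [Module Λ M] : Prop :=
  (∃ x : M, x ≠ 0) ∧ ∀ e : M →ₗ[Λ] M, e ∘ₗ e = e → e = 0 ∨ e = LinearMap.id

/-- A right minimal morphism. -/
def RightMinimal {B C : Type} [AddCommGroup B] [Module Λ B] [AddCommGroup C] [Module Λ C]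
    (f : B →ₗ[Λ] C) : Prop :=
  ∀ g : B →ₗ[Λ] B, f ∘ₗ g = f → Bijective g

/-- A left minimal morphism. -/
def LeftMinimal {A B : Type} [AddCommGroup A] [Module Λ A] [AddCommGroup B] [Module Λ B]
    (f : A →ₗ[Λ] B) : Prop :=
  ∀ g : B →ₗ[Λ] B, g ∘ₗ f = f → Bijective g

/-- `f : P → X` is a projective cover: `P` is projective, `f` is surjective and its kernel
is superfluous. -/
def IsProjCover {P X : Type} [AddCommGroup P] [Module Λ P] [AddCommGroup X] [Module Λ X]
    (f : P →ₗ[Λ] X) : Prop :=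
  Module.Projective Λ P ∧ Surjective f ∧
    ∀ N : Submodule Λ P, N ⊔ LinearMap.ker f = ⊤ → N = ⊤

/-- `f : X → I` is an injective envelope: `I` is injective, `f` is injective and its image is
essential. -/
def IsInjEnv {X I : Type} [AddCommGroup X] [Module Λ X] [AddCommGroup I] [Module Λ I]
    (f : X →ₗ[Λ] I) : Prop :=
  Module.Injective Λ I ∧ Injective f ∧
    ∀ N : Submodule Λ I, N ⊓ LinearMap.range f = ⊥ → N = ⊥

/-- An essential submodule. -/
def IsEssentialSub {M : Type} [AddCommGroup M] [Module Λ M] (N : Submodule Λ M) : Prop :=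
  ∀ N' : Submodule Λ M, N ⊓ N' = ⊥ → N' = ⊥

/-- A uniserial module: submodules are totally ordered by inclusion. -/
def Uniserial (M : Type) [AddCommGroup M] [Module Λ M] : Prop :=
  ∀ N₁ N₂ : Submodule Λ M, N₁ ≤ N₂ ∨ N₂ ≤ N₁

/-- The radical of a module: the intersection of its maximal submodules. -/
def radSub (M : Type) [AddCommGroup M] [Module Λ M] : Submodule Λ M :=
  sInf {N : Submodule Λ M | IsCoatom N}

/-- An almost split (Auslander-Reiten) sequence `0 → A → E → C → 0`. -/
def IsAlmostSplitSeq {A E C : Type} [AddCommGroup A] [Module Λ A]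
    [AddCommGroup E] [Module Λ E] [AddCommGroup C] [Module Λ C]
    (f : A →ₗ[Λ] E) (g : E →ₗ[Λ] C) : Prop :=
  Injective f ∧ Surjective g ∧ LinearMap.range f = LinearMap.ker g ∧
  (¬∃ r : E →ₗ[Λ] A, r ∘ₗ f = LinearMap.id) ∧
  Indecomposable Λ A ∧ Indecomposable Λ C ∧
  ∀ (Z : ModuleCat.{0} Λ) (h : Z →ₗ[Λ] C), Module.Finite Λ Z →
    (¬∃ s : C →ₗ[Λ] Z, h ∘ₗ s = LinearMap.id) → ∃ l : (Z →ₗ[Λ] E), g ∘ₗ l = h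

/-- `N` is the Auslander-Reiten translate `τ M` of `M`: writing `M ≅ P ⊕ (⊕ᵢ Cᵢ)` with `P`
projective and `Cᵢ` indecomposable ends of almost split sequences `0 → Aᵢ → Eᵢ → Cᵢ → 0`,
we have `N ≅ ⊕ᵢ Aᵢ`. -/
def IsTauOf (N M : Type) [AddCommGroup N] [Module Λ N] [AddCommGroup M] [Module Λ M] : Prop :=
  ∃ (r : ℕ) (P : ModuleCat.{0} Λ) (A E C : Fin r → ModuleCat.{0} Λ)
    (f : ∀ i, (A i : Type) →ₗ[Λ] (E i : Type)) (g : ∀ i, (E i : Type) →ₗ[Λ] (C i : Type)),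
    Module.Projective Λ P ∧ (∀ i, IsAlmostSplitSeq Λ (f i) (g i)) ∧
    Nonempty (M ≃ₗ[Λ] (Prod (P : Type) ((i : Fin r) → (C i : Type)))) ∧
    Nonempty (N ≃ₗ[Λ] (∀ i, (A i : Type)))

end Prelim

section HomModule

variable {R : Type} [Ring R] {T M : Type} [AddCommGroup T] [Module R T]
  [AddCommGroup M] [Module R M]

/-- `Hom_R(T, M)` as a left module over `B = End_R(T)ᵒᵖ`, via precomposition. -/
instance instSMulHomEndOp : SMul (Module.End R T)ᵐᵒᵖ (T →ₗ[R] M) :=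
  ⟨fun b f => f ∘ₗ b.unop⟩

lemma endOp_smul_def (b : (Module.End R T)ᵐᵒᵖ) (f : T →ₗ[R] M) :
    b • f = f ∘ₗ b.unop := rfl

instance instMulActionHomEndOp : MulAction (Module.End R T)ᵐᵒᵖ (T →ₗ[R] M) where
  one_smul f := by ext x; rfl
  mul_smul b c f := by ext x; rfl

instance instDistribMulActionHomEndOp :
    DistribMulAction (Module.End R T)ᵐᵒᵖ (T →ₗ[R] M) where
  smul_zero b := by ext x; rfl
  smul_add b f g := by ext x; rfl

instance instModuleHomEndOp : Module (Module.End R T)ᵐᵒᵖ (T →ₗ[R] M) where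
  add_smul b c f := by ext x; simp [endOp_smul_def]
  zero_smul f := by ext x; simp [endOp_smul_def]

end HomModule
/-- A retract of an injective module is injective. -/
lemma inj_of_retract {R M N : Type} [Ring R] [AddCommGroup M] [Module R M]
    [AddCommGroup N] [Module R N] (hN : Module.Injective R N)
    (i : M →ₗ[R] N) (r : N →ₗ[R] M) (H : r ∘ₗ i = LinearMap.id) :
    Module.Injective R M := by
  constructor
  intro X Y _ _ _ _ f hf g
  obtain ⟨h, hh⟩ := hN.out f hf (i ∘ₗ g)
  refine ⟨r ∘ₗ h, fun x => ?_⟩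
  have := congrArg (fun φ : M →ₗ[R] M => φ (g x)) H
  simpa [hh x] using this

theorem stmt2 (Λ : Type) [Ring Λ] (k : Type) [CommRing k] [IsArtinianRing k] [Algebra k Λ]
    [Module.Finite k Λ]
    (X : Type) [AddCommGroup X] [Module Λ X] [Module.Finite Λ X] (hX : MemC Λ X)
    (P : Type) [AddCommGroup P] [Module Λ P] [Module.Finite Λ P]
    (f : P →ₗ[Λ] X) (hf : IsProjCover Λ f)
    (I : Type) [AddCommGroup I] [Module Λ I] [Module.Finite Λ I]
    (g : X →ₗ[Λ] I) (hg : IsInjEnv Λ g) :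
    (Module.Injective Λ P ∧ MemC Λ P) ∧ (Module.Projective Λ I ∧ MemC Λ I) := by
  obtain ⟨⟨Q, hQfin, ⟨hQproj, hQinj⟩, q, hq⟩, ⟨Q', hQ'fin, ⟨hQ'proj, hQ'inj⟩, c, hc⟩⟩ := hX
  obtain ⟨hPproj, hfsurj, hsmall⟩ := hf
  obtain ⟨hIinj, hginj, hess⟩ := hg
  -- lift q : Q → X through f : P → X
  haveI := hQproj
  obtain ⟨h, hh⟩ := Module.projective_lifting_property f q hfsurj
  -- h is surjective
  have hrange : LinearMap.range h ⊔ LinearMap.ker f = ⊤ := by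
    rw [eq_top_iff]
    intro x _
    obtain ⟨y, hy⟩ := hq (f x)
    have hxy : x - h y ∈ LinearMap.ker f := by
      simp only [LinearMap.mem_ker, map_sub]
      have : f (h y) = q y := by
        have := congrArg (fun φ : Q →ₗ[Λ] X => φ y) hh
        simpa using this
      rw [this, hy, sub_self]
    have : x = h y + (x - h y) := by abel
    rw [this]
    exact Submodule.add_mem_sup (LinearMap.mem_range_self h y) hxy
  have hhsurj : Surjective h := by
    rw [← LinearMap.range_eq_top]
    exact hsmall _ hrange
  -- split: s : P → Q with h ∘ s = id
  haveI := hPproj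
  obtain ⟨s, hs⟩ := Module.projective_lifting_property h (LinearMap.id (R := Λ) (M := P)) hhsurj
  have hPinj : Module.Injective Λ P := inj_of_retract hQinj s h hs
  -- extend c : X → Q' along g : X → I
  obtain ⟨h', hh'⟩ := hQ'inj.out g hginj c
  have hh'inj : Injective h' := by
    rw [← LinearMap.ker_eq_bot]
    apply hess
    rw [eq_bot_iff]
    rintro x ⟨hx1, y, rfl⟩
    have : c y = 0 := by rw [← hh' y]; exact hx1
    have : y = 0 := hc (by simpa using this)
    simp [this]
  -- retract: r : Q' → I with r ∘ h' = id
  obtain ⟨r, hr⟩ := hIinj.out h' hh'inj (LinearMap.id (R := Λ) (M := I))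
  have hIproj : Module.Projective Λ I :=
    Module.Projective.of_split (R := Λ) (M := ↥Q') h' r (by ext x; exact hr x)
  refine ⟨⟨hPinj, ?_, ?_⟩, hIproj, ?_, ?_⟩
  · exact ⟨ModuleCat.of Λ P, ‹Module.Finite Λ P›, ⟨hPproj, hPinj⟩, LinearMap.id, surjective_id⟩
  · exact ⟨ModuleCat.of Λ P, ‹Module.Finite Λ P›, ⟨hPproj, hPinj⟩, LinearMap.id, injective_id⟩
  · exact ⟨ModuleCat.of Λ I, ‹Module.Finite Λ I›, ⟨hIproj, hIinj⟩, LinearMap.id, surjective_id⟩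
  · exact ⟨ModuleCat.of Λ I, ‹Module.Finite Λ I›, ⟨hIproj, hIinj⟩, LinearMap.id, injective_id⟩
end

section
/- Let Λ be an artin algebra. Then the subcategory C_Λ = Gen(Q̃) ∩ Cogen(Q̃) contains a (classical) tilting Λ-module if and only if the dominant dimension of Λ is at least 2. -/
open Function LinearMap

section MyHelpers
variable {Λ : Type} [Ring Λ]

lemma myInjExtend {Q : Type} [AddCommGroup Q] [Module Λ Q] (hQ : Module.Injective Λ Q)
    {X Y : Type} [AddCommGroup X] [AddCommGroup Y] [Module Λ X] [Module Λ Y]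
    (f : X →ₗ[Λ] Y) (hf : Function.Injective f) (g : X →ₗ[Λ] Q) :
    ∃ h : Y →ₗ[Λ] Q, h ∘ₗ f = g := by
  obtain ⟨h, hh⟩ := hQ.out f hf g
  exact ⟨h, by ext x; exact hh x⟩

lemma myInjPi {Q : Type} [AddCommGroup Q] [Module Λ Q] (hQ : Module.Injective Λ Q)
    (ι : Type) : Module.Injective Λ (ι → Q) := by
  constructor
  intro X Y _ _ _ _ f hf g
  have H : ∀ i : ι, ∃ h : Y →ₗ[Λ] Q, ∀ x, h (f x) = (LinearMap.proj i ∘ₗ g) x :=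
    fun i => hQ.out f hf (LinearMap.proj i ∘ₗ g)
  choose h hh using H
  exact ⟨LinearMap.pi h, fun x => by ext i; exact hh i x⟩

lemma myInjProd {Q Q' : Type} [AddCommGroup Q] [Module Λ Q] [AddCommGroup Q'] [Module Λ Q']
    (hQ : Module.Injective Λ Q) (hQ' : Module.Injective Λ Q') :
    Module.Injective Λ (Q × Q') := by
  constructor
  intro X Y _ _ _ _ f hf g
  obtain ⟨h1, hh1⟩ := hQ.out f hf (LinearMap.fst Λ Q Q' ∘ₗ g)
  obtain ⟨h2, hh2⟩ := hQ'.out f hf (LinearMap.snd Λ Q Q' ∘ₗ g)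
  refine ⟨h1.prod h2, fun x => ?_⟩
  have e1 := hh1 x; have e2 := hh2 x
  simp only [LinearMap.comp_apply, LinearMap.fst_apply, LinearMap.snd_apply] at e1 e2
  exact Prod.ext e1 e2

/-- `Fin (n+1) → M` is linearly equivalent to `M × (Fin n → M)`. -/
def myPiFinSuccEquiv (n : ℕ) (M : Type) [AddCommGroup M] [Module Λ M] :
    (Fin (n+1) → M) ≃ₗ[Λ] M × (Fin n → M) where
  toFun f := (f 0, fun i => f i.succ)
  invFun p := Fin.cons p.1 p.2
  map_add' f g := rfl
  map_smul' c f := rfl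
  left_inv f := by funext i; refine Fin.cases ?_ ?_ i <;> simp
  right_inv p := by refine Prod.ext ?_ ?_ <;> simp

lemma myProjPiFin {Q : Type} [AddCommGroup Q] [Module Λ Q] (hQ : Module.Projective Λ Q)
    (n : ℕ) : Module.Projective Λ (Fin n → Q) := by
  induction n with
  | zero =>
      have : Subsingleton (Fin 0 → Q) := ⟨fun a b => funext fun i => i.elim0⟩
      have : Module.Free Λ (Fin 0 → Q) := Module.Free.of_subsingleton Λ _
      infer_instance
  | succ n ih =>
      have : Module.Projective Λ (Q × (Fin n → Q)) := by
        have := hQ; have := ih; infer_instance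
      exact Module.Projective.of_equiv (myPiFinSuccEquiv n Q).symm

end MyHelpers

-- the splitting lemma : Ext¹(T,T) = 0 for T = Q0 × (Q0/Λ)
theorem ext1vanish_main (Λ : Type) [Ring Λ] (Q0 : Type) [AddCommGroup Q0] [Module Λ Q0]
    (hproj : Module.Projective Λ Q0) (hinj : Module.Injective Λ Q0)
    (ι : Λ →ₗ[Λ] Q0) (hι : Injective ι)
    (E : Type) [AddCommGroup E] [Module Λ E]
    (F : (Q0 × (Q0 ⧸ LinearMap.range ι)) →ₗ[Λ] E)
    (G : E →ₗ[Λ] (Q0 × (Q0 ⧸ LinearMap.range ι)))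
    (hF : Injective F) (hG : Surjective G) (hFG : LinearMap.range F = LinearMap.ker G) :
    ∃ r : E →ₗ[Λ] (Q0 × (Q0 ⧸ LinearMap.range ι)), r ∘ₗ F = LinearMap.id := by
  classical
  set C := Q0 ⧸ LinearMap.range ι with hC
  set π₀ : Q0 →ₗ[Λ] C := (LinearMap.range ι).mkQ with hπ₀
  have hπ₀surj : Surjective π₀ := Submodule.mkQ_surjective _
  set f1 : Q0 →ₗ[Λ] E := F ∘ₗ LinearMap.inl Λ Q0 C with hf1
  set f2 : C →ₗ[Λ] E := F ∘ₗ LinearMap.inr Λ Q0 C with hf2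
  have hf1inj : Injective f1 := by
    intro x y hxy
    have := hF hxy
    exact congrArg Prod.fst this
  have hGF : ∀ t, G (F t) = 0 := by
    intro t
    have : F t ∈ LinearMap.ker G := hFG ▸ LinearMap.mem_range_self F t
    simpa using this
  -- quotient Ē
  set Eb := E ⧸ LinearMap.range f1 with hEb
  set πE : E →ₗ[Λ] Eb := (LinearMap.range f1).mkQ with hπE
  have hle : LinearMap.range f1 ≤ LinearMap.ker G := by
    rintro x ⟨q, rfl⟩
    exact hGF (q, 0)
  set gb : Eb →ₗ[Λ] (Q0 × C) := Submodule.liftQ _ G hle with hgb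
  have hgb_surj : Surjective gb := by
    intro t; obtain ⟨e, he⟩ := hG t; exact ⟨πE e, he⟩
  set fb2 : C →ₗ[Λ] Eb := πE ∘ₗ f2 with hfb2
  have hfb2inj : Injective fb2 := by
    intro c c' hcc
    have hmem : f2 c - f2 c' ∈ LinearMap.range f1 := by
      have : πE (f2 c - f2 c') = 0 := by
        have : πE (f2 c) = πE (f2 c') := hcc
        rw [map_sub, this, sub_self]
      rwa [← Submodule.ker_mkQ (LinearMap.range f1), LinearMap.mem_ker]
    obtain ⟨x, hx⟩ := hmem
    have : F (x, 0) = F ((0 : Q0), c - c') := by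
      have h2 : f2 (c - c') = f1 x := by rw [map_sub]; exact hx.symm
      calc F (x, 0) = f1 x := rfl
        _ = f2 (c - c') := h2.symm
        _ = F (0, c - c') := rfl
    have h2 := hF this
    have h3 : (0 : C) = c - c' := congrArg Prod.snd h2
    exact sub_eq_zero.mp h3.symm
  have hkergb : LinearMap.ker gb = LinearMap.range fb2 := by
    apply le_antisymm
    · intro z hz
      obtain ⟨e, rfl⟩ := Submodule.mkQ_surjective _ z
      have he : G e = 0 := hz
      have : e ∈ LinearMap.range F := by rw [hFG]; exact he
      obtain ⟨⟨x, c⟩, rfl⟩ := this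
      refine ⟨c, ?_⟩
      show πE (f2 c) = πE (F (x, c))
      have : F (x, c) - f2 c = f1 x := by
        show F (x,c) - F (0,c) = F (x,0)
        rw [← map_sub]
        congr 1
        simp
      have hm : πE (F (x,c) - f2 c) = 0 := by
        rw [this, ← LinearMap.mem_ker, hπE, Submodule.ker_mkQ]
        exact LinearMap.mem_range_self f1 x
      have := sub_eq_zero.mp (by rwa [map_sub] at hm)
      exact this.symm
    · rintro z ⟨c, rfl⟩
      show gb (πE (f2 c)) = 0
      have : gb (πE (f2 c)) = G (f2 c) := rfl
      rw [this]
      show G (F (0, c)) = 0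
      exact hGF _
  -- section s₁ over Q0 component
  obtain ⟨s1, hs1⟩ := Module.projective_lifting_property (h := hproj) gb (LinearMap.inl Λ Q0 C) hgb_surj
  -- lift L of inr ∘ π₀
  obtain ⟨L, hL⟩ := Module.projective_lifting_property (h := hproj) gb ((LinearMap.inr Λ Q0 C) ∘ₗ π₀) hgb_surj
  -- the equiv onto range fb2
  set eC : C ≃ₗ[Λ] LinearMap.range fb2 := LinearEquiv.ofInjective fb2 hfb2inj with heC
  -- h : Λ → C obstruction
  have hLι : ∀ l : Λ, L (ι l) ∈ LinearMap.range fb2 := by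
    intro l
    rw [← hkergb, LinearMap.mem_ker]
    have : gb (L (ι l)) = (LinearMap.inr Λ Q0 C) (π₀ (ι l)) := by
      have := congrArg (fun φ => φ (ι l)) (congrArg DFunLike.coe hL); simpa using this
    rw [this]
    have : π₀ (ι l) = 0 := by
      rw [← LinearMap.mem_ker, hπ₀, Submodule.ker_mkQ]
      exact LinearMap.mem_range_self ι l
    rw [this, map_zero]
  set hmap : Λ →ₗ[Λ] C := eC.symm.toLinearMap ∘ₗ (LinearMap.codRestrict (LinearMap.range fb2) (L ∘ₗ ι) hLι) with hhmap
  -- lift hmap along π₀  (Λ projective)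
  obtain ⟨ht, hht⟩ := Module.projective_lifting_property π₀ hmap hπ₀surj
  -- extend ht along ι (Q0 injective)
  obtain ⟨Hh, hHh⟩ := myInjExtend hinj ι hι ht
  set Hc : Q0 →ₗ[Λ] C := π₀ ∘ₗ Hh with hHc
  have hHcι : Hc ∘ₗ ι = hmap := by
    rw [hHc, LinearMap.comp_assoc, hHh, hht]
  -- s₂' and s₂
  set s2' : Q0 →ₗ[Λ] Eb := L - fb2 ∘ₗ Hc with hs2'
  have hs2'ι : ∀ l, s2' (ι l) = 0 := by
    intro l
    have h1 : fb2 (Hc (ι l)) = fb2 (hmap l) := by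
      have := congrArg (fun φ => φ l) (congrArg DFunLike.coe hHcι)
      simpa using congrArg fb2 this
    have h2 : fb2 (hmap l) = L (ι l) := by
      have : (eC (hmap l) : Eb) = L (ι l) := by
        rw [hhmap]
        simp only [LinearMap.comp_apply, LinearEquiv.coe_coe]
        rw [LinearEquiv.apply_symm_apply]
        rfl
      simpa [heC] using this
    show L (ι l) - fb2 (Hc (ι l)) = 0
    rw [h1, h2, sub_self]
  have hs2'le : LinearMap.range ι ≤ LinearMap.ker s2' := by
    rintro x ⟨l, rfl⟩; exact hs2'ι l
  set s2 : C →ₗ[Λ] Eb := Submodule.liftQ _ s2' hs2'le with hs2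
  have hgbs2 : gb ∘ₗ s2 = LinearMap.inr Λ Q0 C := by
    apply Submodule.linearMap_qext
    refine LinearMap.ext fun x => ?_
    show gb (s2' x) = (LinearMap.inr Λ Q0 C) (π₀ x)
    rw [hs2']
    simp only [LinearMap.sub_apply, map_sub, LinearMap.comp_apply]
    have hLx : gb (L x) = (LinearMap.inr Λ Q0 C) (π₀ x) := by
      have := congrArg (fun φ => φ x) (congrArg DFunLike.coe hL); simpa using this
    have hfb2x : gb (fb2 (Hc x)) = 0 := by
      have : fb2 (Hc x) ∈ LinearMap.ker gb := by
        rw [hkergb]; exact LinearMap.mem_range_self fb2 (Hc x)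
      simpa using this
    rw [hLx, hfb2x, sub_zero]
  -- total section s
  set sT : (Q0 × C) →ₗ[Λ] Eb := s1 ∘ₗ LinearMap.fst Λ Q0 C + s2 ∘ₗ LinearMap.snd Λ Q0 C with hsT
  have hgbsT : gb ∘ₗ sT = LinearMap.id := by
    refine LinearMap.ext fun t => ?_
    obtain ⟨x, c⟩ := t
    show gb (s1 x + s2 c) = (x, c)
    rw [map_add]
    have h1 : gb (s1 x) = (x, 0) := by
      have := congrArg (fun φ => φ x) (congrArg DFunLike.coe hs1); simpa using this
    have h2 : gb (s2 c) = (0, c) := by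
      have := congrArg (fun φ => φ c) (congrArg DFunLike.coe hgbs2); simpa using this
    rw [h1, h2]
    simp
  -- build q : E → C
  have hq_range : ∀ z : Eb, z - sT (gb z) ∈ LinearMap.range fb2 := by
    intro z
    rw [← hkergb, LinearMap.mem_ker, map_sub]
    have : gb (sT (gb z)) = gb z := by
      have := congrArg (fun φ => φ (gb z)) (congrArg DFunLike.coe hgbsT); simpa using this
    rw [this, sub_self]
  set qb : Eb →ₗ[Λ] C := eC.symm.toLinearMap ∘ₗ
    (LinearMap.codRestrict (LinearMap.range fb2) (((LinearMap.id : Eb →ₗ[Λ] Eb) - sT ∘ₗ gb)) hq_range) with hqb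
  set q : E →ₗ[Λ] C := qb ∘ₗ πE with hq
  have hq_f2 : ∀ c, q (f2 c) = c := by
    intro c
    have h1 : (((LinearMap.id : Eb →ₗ[Λ] Eb) - sT ∘ₗ gb)) (fb2 c) = fb2 c := by
      simp only [LinearMap.sub_apply, LinearMap.id_apply, LinearMap.comp_apply]
      have : gb (fb2 c) = 0 := by
        have : fb2 c ∈ LinearMap.ker gb := by rw [hkergb]; exact LinearMap.mem_range_self fb2 c
        simpa using this
      rw [this, map_zero, sub_zero]
    show qb (πE (f2 c)) = c
    have : qb (fb2 c) = c := by
      rw [hqb]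
      simp only [LinearMap.comp_apply, LinearEquiv.coe_coe]
      have hcod : (LinearMap.codRestrict (LinearMap.range fb2) (((LinearMap.id : Eb →ₗ[Λ] Eb) - sT ∘ₗ gb)) hq_range) (fb2 c) = eC c := by
        apply Subtype.ext
        show (((LinearMap.id : Eb →ₗ[Λ] Eb) - sT ∘ₗ gb)) (fb2 c) = (eC c : Eb)
        rw [h1]; rfl
      rw [hcod, LinearEquiv.symm_apply_apply]
    exact this
  have hq_f1 : ∀ x, q (f1 x) = 0 := by
    intro x
    show qb (πE (f1 x)) = 0
    have : πE (f1 x) = 0 := by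
      rw [← LinearMap.mem_ker, hπE, Submodule.ker_mkQ]
      exact LinearMap.mem_range_self f1 x
    rw [this, map_zero]
  -- build p : E → Q0
  obtain ⟨p, hp⟩ := myInjExtend hinj f1 hf1inj LinearMap.id
  have hp_f1 : ∀ x, p (f1 x) = x := by
    intro x
    have := congrArg (fun φ => φ x) (congrArg DFunLike.coe hp); simpa using this
  set α : C →ₗ[Λ] Q0 := p ∘ₗ f2 with hα
  set r : E →ₗ[Λ] (Q0 × C) := (p - α ∘ₗ q).prod q with hr
  refine ⟨r, LinearMap.ext fun t => ?_⟩
  obtain ⟨x, c⟩ := t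
  have hFxc : F (x, c) = f1 x + f2 c := by
    show F (x,c) = F (x,0) + F (0,c)
    rw [← map_add]
    congr 1
    simp
  have hq' : q (F (x, c)) = c := by rw [hFxc, map_add, hq_f1, hq_f2, zero_add]
  refine Prod.ext ?_ ?_
  · show p (F (x, c)) - α (q (F (x, c))) = x
    have hp' : p (F (x, c)) = x + α c := by
      rw [hFxc, map_add, hp_f1]; rfl
    rw [hq', hp']; abel
  · show q (F (x, c)) = c
    exact hq'


theorem fwd (Λ : Type) [Ring Λ]
    (H : ∃ T : ModuleCat.{0} Λ, Module.Finite Λ T ∧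
      (∃ (T0 T1 : ModuleCat.{0} Λ) (a : Λ →ₗ[Λ] T0) (b : T0 →ₗ[Λ] T1),
        InAddOf Λ T T0 ∧ InAddOf Λ T T1 ∧ Injective a ∧ Surjective b ∧
        LinearMap.range a = LinearMap.ker b) ∧ MemC Λ T) :
    DomdimGE2 Λ := by
  obtain ⟨T, hTfin, ⟨T0c, T1c, a, b, hT0add, hT1add, ha, hbsurj, hab⟩, hGen, hCogen⟩ := H
  obtain ⟨Qg, hQgfin, hQgpi, pm, hpm⟩ := hGen
  obtain ⟨Qc, hQcfin, hQcpi, wm, hwm⟩ := hCogen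
  obtain ⟨m₀, p₀, s₀, hp₀s₀⟩ := hT0add
  obtain ⟨m₁, p₁, s₁, hp₁s₁⟩ := hT1add
  -- surjection from a proj-inj module onto T0
  set πT : (Fin m₀ → ↥Qg) →ₗ[Λ] (Fin m₀ → ↥T) := LinearMap.pi (fun i => pm ∘ₗ LinearMap.proj i) with hπT
  have hπTsurj : Surjective πT := by
    intro t
    refine ⟨fun i => surjInv hpm (t i), funext fun i => ?_⟩
    simpa [hπT] using surjInv_eq hpm (t i)
  have hp₀surj : Surjective p₀ := by
    intro y; exact ⟨s₀ y, by have := congrArg (fun φ => φ y) (congrArg DFunLike.coe hp₀s₀); simpa using this⟩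
  set π₀ : (Fin m₀ → ↥Qg) →ₗ[Λ] ↥T0c := p₀ ∘ₗ πT with hπ₀def
  have hπ₀surj : Surjective π₀ := by
    intro y; obtain ⟨t, ht⟩ := hp₀surj y; obtain ⟨q, hq⟩ := hπTsurj t
    exact ⟨q, by simp [hπ₀def, hq, ht]⟩
  -- section over Λ
  obtain ⟨s, hs⟩ := Module.projective_lifting_property π₀ a hπ₀surj
  have hsinj : Injective s := by
    intro x y hxy
    apply ha
    have : π₀ (s x) = π₀ (s y) := by rw [hxy]
    simpa [← LinearMap.comp_apply, hs] using this
  set Z := (Fin m₀ → ↥Qg) ⧸ LinearMap.range s with hZ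
  set πZ : (Fin m₀ → ↥Qg) →ₗ[Λ] Z := (LinearMap.range s).mkQ with hπZ
  set ρ : (Fin m₀ → ↥Qg) →ₗ[Λ] ↥T1c := b ∘ₗ π₀ with hρ
  have hle : LinearMap.range s ≤ LinearMap.ker ρ := by
    rintro x ⟨l, rfl⟩
    have : π₀ (s l) = a l := by
      have := congrArg (fun φ => φ l) (congrArg DFunLike.coe hs); simpa using this
    have : ρ (s l) = b (a l) := by simp [hρ, this]
    have hba : b (a l) = 0 := by
      have : a l ∈ LinearMap.ker b := hab ▸ LinearMap.mem_range_self a l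
      simpa using this
    simp [LinearMap.mem_ker, this, hba]
  set ρbar : Z →ₗ[Λ] ↥T1c := Submodule.liftQ (LinearMap.range s) ρ hle with hρbar
  set W₀ := LinearMap.ker π₀ with hW₀
  set φ' : ↥W₀ →ₗ[Λ] Z := πZ ∘ₗ W₀.subtype with hφ'
  have hsapp : ∀ l, π₀ (s l) = a l := fun l => by
    have := congrArg (fun φ => φ l) (congrArg DFunLike.coe hs); simpa using this
  have hφ'inj : Injective φ' := by
    rintro ⟨w, hw⟩ ⟨w', hw'⟩ h
    have hmem : w - w' ∈ LinearMap.range s := by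
      have : πZ (w - w') = 0 := by
        have hh : πZ w = πZ w' := h
        rw [map_sub, hh, sub_self]
      rwa [← Submodule.ker_mkQ (LinearMap.range s), LinearMap.mem_ker]
    obtain ⟨l, hl⟩ := hmem
    have h1 : π₀ (w - w') = 0 := by
      rw [map_sub]
      rw [show π₀ w = 0 from hw, show π₀ w' = 0 from hw', sub_zero]
    have hal : a l = 0 := by rw [← hsapp l, hl]; exact h1
    have hl0 : l = 0 := ha (by simpa using hal)
    have : w - w' = 0 := by rw [← hl, hl0, map_zero]
    exact Subtype.ext (sub_eq_zero.mp this)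
  have hker : LinearMap.ker ρbar = LinearMap.range φ' := by
    apply le_antisymm
    · rintro z hz
      obtain ⟨q, rfl⟩ := Submodule.mkQ_surjective _ z
      have hq : ρ q = 0 := hz
      have : π₀ q ∈ LinearMap.ker b := by simpa [hρ] using hq
      rw [← hab] at this
      obtain ⟨l, hl⟩ := this
      refine ⟨⟨q - s l, ?_⟩, ?_⟩
      · show π₀ (q - s l) = 0
        rw [map_sub, hsapp l, hl, sub_self]
      · show πZ (q - s l) = Submodule.mkQ _ q
        rw [map_sub]
        have : πZ (s l) = 0 := by
          rw [← LinearMap.mem_ker, hπZ, Submodule.ker_mkQ]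
          exact LinearMap.mem_range_self s l
        rw [this, sub_zero]
    · rintro z ⟨⟨w, hw⟩, rfl⟩
      show ρbar (πZ w) = 0
      have : ρbar (πZ w) = ρ w := rfl
      rw [this]
      show b (π₀ w) = 0
      rw [show π₀ w = 0 from hw, map_zero]
  -- extension of the inclusion W₀ → Q' along φ'
  obtain ⟨h, hh⟩ := myInjExtend (myInjPi hQgpi.2 (Fin m₀)) φ' hφ'inj W₀.subtype
  -- embedding of T1 into projinj
  set j₁ : ↥T1c →ₗ[Λ] (Fin m₁ → ↥Qc) := (LinearMap.pi (fun i => wm ∘ₗ LinearMap.proj i)) ∘ₗ s₁ with hj₁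
  have hs₁inj : Injective s₁ := by
    intro x y hxy
    have := congrArg (fun φ => φ x) (congrArg DFunLike.coe hp₁s₁)
    have hx : p₁ (s₁ x) = x := by simpa using this
    have := congrArg (fun φ => φ y) (congrArg DFunLike.coe hp₁s₁)
    have hy : p₁ (s₁ y) = y := by simpa using this
    rw [← hx, ← hy, hxy]
  have hj₁inj : Injective j₁ := by
    intro x y hxy
    apply hs₁inj
    funext i
    exact hwm (congrFun hxy i)
  set G : Z →ₗ[Λ] ((Fin m₀ → ↥Qg) × (Fin m₁ → ↥Qc)) := h.prod (j₁ ∘ₗ ρbar) with hG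
  have hGinj : Injective G := by
    have : LinearMap.ker G = ⊥ := by
      apply LinearMap.ker_eq_bot'.mpr
      intro z hz
      have h2 : j₁ (ρbar z) = 0 := congrArg Prod.snd hz
      have hρz : ρbar z = 0 := by
        apply hj₁inj; simpa using h2
      have : z ∈ LinearMap.range φ' := hker ▸ (LinearMap.mem_ker.mpr hρz)
      obtain ⟨w, rfl⟩ := this
      have h1 : h (φ' w) = 0 := congrArg Prod.fst hz
      have : (W₀.subtype) w = 0 := by
        rw [← congrArg (fun φ => φ w) (congrArg DFunLike.coe hh)]
        exact h1
      have : w = 0 := Subtype.ext (by simpa using this)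
      rw [this, map_zero]
    exact LinearMap.ker_eq_bot.mp this
  -- assemble
  haveI := hQgfin
  haveI := hQcfin
  refine ⟨ModuleCat.of Λ (Fin m₀ → ↥Qg),
          ModuleCat.of Λ ((Fin m₀ → ↥Qg) × (Fin m₁ → ↥Qc)),
          s, G ∘ₗ πZ, ?_, ?_, ?_, ?_, hsinj, ?_⟩
  · exact (inferInstance : Module.Finite Λ (Fin m₀ → ↥Qg))
  · exact ⟨myProjPiFin hQgpi.1 m₀, myInjPi hQgpi.2 (Fin m₀)⟩
  · exact (inferInstance : Module.Finite Λ ((Fin m₀ → ↥Qg) × (Fin m₁ → ↥Qc)))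
  · constructor
    · haveI := myProjPiFin hQgpi.1 m₀
      haveI := myProjPiFin hQcpi.1 m₁
      exact (inferInstance : Module.Projective Λ ((Fin m₀ → ↥Qg) × (Fin m₁ → ↥Qc)))
    · exact myInjProd (myInjPi hQgpi.2 (Fin m₀)) (myInjPi hQcpi.2 (Fin m₁))
  · apply le_antisymm
    · rintro x ⟨l, rfl⟩
      show G (πZ (s l)) = 0
      have : πZ (s l) = 0 := by
        rw [← LinearMap.mem_ker, hπZ, Submodule.ker_mkQ]
        exact LinearMap.mem_range_self s l
      rw [this, map_zero]
    · intro x hx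
      have : G (πZ x) = 0 := hx
      have : πZ x = 0 := hGinj (by simpa using this)
      rwa [← Submodule.ker_mkQ (LinearMap.range s), LinearMap.mem_ker]


theorem bwd (Λ : Type) [Ring Λ] (h : DomdimGE2 Λ) :
    ∃ T : ModuleCat.{0} Λ, Module.Finite Λ T ∧ IsTilting Λ T ∧ MemC Λ T := by
  classical
  obtain ⟨Q0c, Q1c, ι, g, hQ0fin, hQ0pi, hQ1fin, hQ1pi, hι, hιg⟩ := h
  haveI := hQ0fin
  haveI := hQ1fin
  haveI := hQ0pi.1
  refine ⟨ModuleCat.of Λ (↥Q0c × (↥Q0c ⧸ LinearMap.range ι)), ?_, ⟨?_, ?_, ?_⟩, ?_, ?_⟩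
  · exact (inferInstance : Module.Finite Λ (↥Q0c × (↥Q0c ⧸ LinearMap.range ι)))
  · -- pdLE 1
    show ∃ (P : ModuleCat.{0} Λ)
      (gP : P →ₗ[Λ] (ModuleCat.of Λ (↥Q0c × (↥Q0c ⧸ LinearMap.range ι)))),
      Module.Projective Λ P ∧ Module.Finite Λ P ∧ Surjective gP ∧
      Module.Projective Λ (↥(LinearMap.ker gP))
    refine ⟨ModuleCat.of Λ (↥Q0c × ↥Q0c),
      LinearMap.prodMap LinearMap.id (LinearMap.range ι).mkQ, ?_, ?_, ?_, ?_⟩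
    · exact (inferInstance : Module.Projective Λ (↥Q0c × ↥Q0c))
    · exact (inferInstance : Module.Finite Λ (↥Q0c × ↥Q0c))
    · rintro ⟨x, c⟩
      obtain ⟨y, rfl⟩ := Submodule.mkQ_surjective _ c
      exact ⟨(x, y), rfl⟩
    · -- kernel is isomorphic to Λ
      set gP : (↥Q0c × ↥Q0c) →ₗ[Λ] (↥Q0c × (↥Q0c ⧸ LinearMap.range ι)) :=
        LinearMap.prodMap LinearMap.id (LinearMap.range ι).mkQ with hgP
      have hmem : ∀ l : Λ, ((LinearMap.inr Λ ↥Q0c ↥Q0c) ∘ₗ ι) l ∈ LinearMap.ker gP := by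
        intro l
        have : (LinearMap.range ι).mkQ (ι l) = 0 := by
          rw [← LinearMap.mem_ker, Submodule.ker_mkQ]
          exact LinearMap.mem_range_self ι l
        show ((0 : ↥Q0c), (LinearMap.range ι).mkQ (ι l)) = 0
        rw [this]
        rfl
      set kmap : Λ →ₗ[Λ] ↥(LinearMap.ker gP) :=
        LinearMap.codRestrict (LinearMap.ker gP) ((LinearMap.inr Λ ↥Q0c ↥Q0c) ∘ₗ ι) hmem with hkmap
      have hbij : Bijective kmap := by
        constructor
        · intro l l' hll
          apply hι
          have := congrArg (fun z : ↥(LinearMap.ker gP) => (z : ↥Q0c × ↥Q0c).2) hll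
          exact this
        · rintro ⟨⟨x, y⟩, hxy⟩
          have hx : x = 0 := congrArg Prod.fst hxy
          have hy : (LinearMap.range ι).mkQ y = 0 := congrArg Prod.snd hxy
          have : y ∈ LinearMap.range ι := by
            rwa [← Submodule.ker_mkQ (LinearMap.range ι), LinearMap.mem_ker]
          obtain ⟨l, rfl⟩ := this
          refine ⟨l, Subtype.ext ?_⟩
          show ((0 : ↥Q0c), ι l) = (x, ι l)
          rw [hx]
      exact Module.Projective.of_equiv (LinearEquiv.ofBijective kmap hbij)
  · -- Ext1Vanish
    intro E F G hF hG hFG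
    exact ext1vanish_main Λ ↥Q0c hQ0pi.1 hQ0pi.2 ι hι ↥E F G hF hG hFG
  · -- the tilting sequence
    refine ⟨Q0c, ModuleCat.of Λ (↥Q0c ⧸ LinearMap.range ι), ι, (LinearMap.range ι).mkQ,
      ?_, ?_, hι, Submodule.mkQ_surjective _, (Submodule.ker_mkQ _).symm⟩
    · exact ⟨1, (LinearMap.fst Λ ↥Q0c (↥Q0c ⧸ LinearMap.range ι)) ∘ₗ LinearMap.proj 0,
        LinearMap.pi (fun _ => LinearMap.inl Λ ↥Q0c (↥Q0c ⧸ LinearMap.range ι)),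
        LinearMap.ext fun x => rfl⟩
    · exact ⟨1, (LinearMap.snd Λ ↥Q0c (↥Q0c ⧸ LinearMap.range ι)) ∘ₗ LinearMap.proj 0,
        LinearMap.pi (fun _ => LinearMap.inr Λ ↥Q0c (↥Q0c ⧸ LinearMap.range ι)),
        LinearMap.ext fun x => rfl⟩
  · -- GenByProjInj
    refine ⟨ModuleCat.of Λ (↥Q0c × ↥Q0c), ?_, ?_, ?_⟩
    · exact (inferInstance : Module.Finite Λ (↥Q0c × ↥Q0c))
    · exact ⟨(inferInstance : Module.Projective Λ (↥Q0c × ↥Q0c)),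
        myInjProd hQ0pi.2 hQ0pi.2⟩
    · refine ⟨LinearMap.prodMap LinearMap.id (LinearMap.range ι).mkQ, ?_⟩
      rintro ⟨x, c⟩
      obtain ⟨y, rfl⟩ := Submodule.mkQ_surjective _ c
      exact ⟨(x, y), rfl⟩
  · -- CogenByProjInj
    have hle : LinearMap.range ι ≤ LinearMap.ker g := le_of_eq hιg
    set γ : (↥Q0c ⧸ LinearMap.range ι) →ₗ[Λ] ↥Q1c := Submodule.liftQ _ g hle with hγ
    have hγinj : Injective γ := by
      intro c c' hcc
      obtain ⟨x, rfl⟩ := Submodule.mkQ_surjective _ c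
      obtain ⟨y, rfl⟩ := Submodule.mkQ_surjective _ c'
      have : g (x - y) = 0 := by
        have hgx : γ ((LinearMap.range ι).mkQ x) = g x := rfl
        have hgy : γ ((LinearMap.range ι).mkQ y) = g y := rfl
        rw [map_sub, ← hgx, ← hgy, hcc, sub_self]
      have : x - y ∈ LinearMap.range ι := by rw [hιg]; exact this
      have : (LinearMap.range ι).mkQ (x - y) = 0 := by
        rwa [← LinearMap.mem_ker, Submodule.ker_mkQ]
      rw [map_sub, sub_eq_zero] at this
      exact this
    refine ⟨ModuleCat.of Λ (↥Q0c × ↥Q1c), ?_, ?_, ?_⟩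
    · exact (inferInstance : Module.Finite Λ (↥Q0c × ↥Q1c))
    · refine ⟨?_, myInjProd hQ0pi.2 hQ1pi.2⟩
      haveI := hQ1pi.1
      exact (inferInstance : Module.Projective Λ (↥Q0c × ↥Q1c))
    · refine ⟨LinearMap.prodMap LinearMap.id γ, ?_⟩
      rintro ⟨x, c⟩ ⟨y, c'⟩ hxy
      have h1 : x = y := congrArg Prod.fst hxy
      have h2 : γ c = γ c' := congrArg Prod.snd hxy
      exact Prod.ext h1 (hγinj h2)


theorem stmt10 (Λ : Type) [Ring Λ] (k : Type) [CommRing k] [IsArtinianRing k] [Algebra k Λ]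
    [Module.Finite k Λ] :
    (∃ T : ModuleCat.{0} Λ, Module.Finite Λ T ∧ IsTilting Λ T ∧ MemC Λ T) ↔
    DomdimGE2 Λ := by
  constructor
  · rintro ⟨T, hTfin, hTilt, hMem⟩
    exact fwd Λ ⟨T, hTfin, hTilt.2.2, hMem⟩
  · exact bwd Λ
end
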